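/- Let F = {f_i} be a frame for a Krein space H with synthesis operator T. Then F is a Parseval J-frame for H if and only if: N(T) = (N(T) ∩ ℓ²(I₊)) [∔] (N(T) ∩ ℓ²(I₋)) and T⁺ f_i = (I − F₀) e_i for all i ∈ I, where F₀ is the J₂-selfadjoint projection of ℓ²(I) onto N(T). -/

import Mathlib

noncomputable section

open scoped Classical

open Function

/-- The indefinite inner product `[x,y] = ⟨Jx, y⟩` induced by an operator `J`. -/
def kre {E : Type*} [NormedAddCommGroup E] [InnerProductSpace ℂ E]
    (J : E →L[ℂ] E) (x y : E) : ℂ := @inner ℂ _ _ (J x) y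

/-- `J` is a fundamental symmetry: a selfadjoint unitary (involutive) operator. -/
def IsFundSym {E : Type*} [NormedAddCommGroup E] [InnerProductSpace ℂ E] [CompleteSpace E]
    (J : E →L[ℂ] E) : Prop :=
  IsSelfAdjoint J ∧ J.comp J = ContinuousLinearMap.id ℂ E

/-- The J-orthogonal companion of a subspace. -/
def JorthCompanion {E : Type*} [NormedAddCommGroup E] [InnerProductSpace ℂ E]
    (J : E →L[ℂ] E) (S : Submodule ℂ E) : Submodule ℂ E where
  carrier := {x | ∀ s ∈ S, kre J x s = 0}
  zero_mem' := by intro s hs; simp [kre]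
  add_mem' := by
    intro a b ha hb s hs
    have h1 := ha s hs
    have h2 := hb s hs
    simp only [kre, map_add, inner_add_left] at h1 h2 ⊢
    rw [h1, h2, add_zero]
  smul_mem' := by
    intro c x hx s hs
    have h1 := hx s hs
    simp only [kre, map_smul, inner_smul_left] at h1 ⊢
    rw [h1, mul_zero]

/-- Uniformly J-positive subspace. -/
def UnifJPos {E : Type*} [NormedAddCommGroup E] [InnerProductSpace ℂ E]
    (J : E →L[ℂ] E) (S : Submodule ℂ E) : Prop :=
  ∃ α : ℝ, 0 < α ∧ ∀ x ∈ S, α * ‖x‖ ^ 2 ≤ (kre J x x).re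

/-- Uniformly J-negative subspace. -/
def UnifJNeg {E : Type*} [NormedAddCommGroup E] [InnerProductSpace ℂ E]
    (J : E →L[ℂ] E) (S : Submodule ℂ E) : Prop :=
  ∃ α : ℝ, 0 < α ∧ ∀ x ∈ S, (kre J x x).re ≤ -(α * ‖x‖ ^ 2)

/-- Maximal uniformly J-positive subspace. -/
def MaxUnifJPos {E : Type*} [NormedAddCommGroup E] [InnerProductSpace ℂ E]
    (J : E →L[ℂ] E) (S : Submodule ℂ E) : Prop :=
  UnifJPos J S ∧ ∀ S' : Submodule ℂ E, UnifJPos J S' → S ≤ S' → S' = S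

/-- Maximal uniformly J-negative subspace. -/
def MaxUnifJNeg {E : Type*} [NormedAddCommGroup E] [InnerProductSpace ℂ E]
    (J : E →L[ℂ] E) (S : Submodule ℂ E) : Prop :=
  UnifJNeg J S ∧ ∀ S' : Submodule ℂ E, UnifJNeg J S' → S ≤ S' → S' = S

/-- J-selfadjoint operator (with respect to the indefinite inner product of `J`). -/
def IsJSelfAdj {E : Type*} [NormedAddCommGroup E] [InnerProductSpace ℂ E]
    (J : E →L[ℂ] E) (A : E →L[ℂ] E) : Prop :=
  ∀ x y : E, kre J (A x) y = kre J x (A y)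

/-- The J-order: `A ≤_J B` iff `B - A` is J-positive. -/
def JLe {E : Type*} [NormedAddCommGroup E] [InnerProductSpace ℂ E]
    (J : E →L[ℂ] E) (A B : E →L[ℂ] E) : Prop :=
  ∀ x : E, 0 ≤ (kre J (B x - A x) x).re ∧ (kre J (B x - A x) x).im = 0

/-- The subspace of `ℓ²(I)` supported on a subset (given by a predicate) of `I`. -/
def suppSub {I : Type*} (A : I → Prop) : Submodule ℂ (lp (fun _ : I => ℂ) 2) where
  carrier := {x | ∀ i, ¬ A i → x i = 0}
  zero_mem' := by intro i _; rfl
  add_mem' := by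
    intro a b ha hb i hi
    have : (↑(a + b) : ∀ i, ℂ) i = a i + b i := by
      rw [lp.coeFn_add]; rfl
    simp [this, ha i hi, hb i hi]
  smul_mem' := by
    intro c x hx i hi
    have : (↑(c • x) : ∀ i, ℂ) i = c • x i := by
      rw [lp.coeFn_smul]; rfl
    simp [this, hx i hi]

variable {H : Type*} [NormedAddCommGroup H] [InnerProductSpace ℂ H] [CompleteSpace H]
variable {I : Type*} [DecidableEq I]

/-- `i` is a "positive index" for the family `f` w.r.t. `J`: `[f i, f i] ≥ 0`. -/
def posIdx {H : Type*} [NormedAddCommGroup H] [InnerProductSpace ℂ H]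
    (J : H →L[ℂ] H) (f : I → H) (i : I) : Prop := 0 ≤ (kre J (f i) (f i)).re

/-- The sign `σ_i = sgn [f i, f i]` (as a complex scalar, `+1` on `I₊` and `-1` on `I₋`). -/
def sgnv {H : Type*} [NormedAddCommGroup H] [InnerProductSpace ℂ H]
    (J : H →L[ℂ] H) (f : I → H) (i : I) : ℂ := if posIdx J f i then 1 else -1

/-- Closure of the span of the vectors of the family `h` with positive indices (signs taken
from the family `f`). -/
def posSpan {H : Type*} [NormedAddCommGroup H] [InnerProductSpace ℂ H]
    (J : H →L[ℂ] H) (f h : I → H) : Submodule ℂ H :=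
  (Submodule.span ℂ {x | ∃ i, posIdx J f i ∧ h i = x}).topologicalClosure

/-- Closure of the span of the vectors of the family `h` with negative indices. -/
def negSpan {H : Type*} [NormedAddCommGroup H] [InnerProductSpace ℂ H]
    (J : H →L[ℂ] H) (f h : I → H) : Submodule ℂ H :=
  (Submodule.span ℂ {x | ∃ i, ¬ posIdx J f i ∧ h i = x}).topologicalClosure

/-- A Bessel family in a Hilbert space. -/
def IsBessel {H : Type*} [NormedAddCommGroup H] [InnerProductSpace ℂ H]
    (g : I → H) : Prop :=
  ∃ β : ℝ, ∀ (x : H) (s : Finset I),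
    ∑ i ∈ s, ‖@inner ℂ _ _ (g i) x‖ ^ 2 ≤ β * ‖x‖ ^ 2

/-- `g` is a dual family for `f`: the signs coincide and the two indefinite
reconstruction formulas hold. -/
def IsDualFamily {H : Type*} [NormedAddCommGroup H] [InnerProductSpace ℂ H]
    (J : H →L[ℂ] H) (f g : I → H) : Prop :=
  (∀ i, Real.sign ((kre J (g i) (g i)).re) = Real.sign ((kre J (f i) (f i)).re)) ∧
  (∀ x : H, HasSum (fun i => (sgnv J f i * kre J x (f i)) • g i) x) ∧
  (∀ x : H, HasSum (fun i => (sgnv J f i * kre J x (g i)) • f i) x)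


namespace PJFaux

variable {I : Type*} [DecidableEq I]

lemma lp2_ext {x y : lp (fun _ : I => ℂ) 2} (h : ∀ i, x i = y i) : x = y := lp.ext (funext h)

lemma single_smul_one (i : I) (c : ℂ) :
    lp.single 2 i c = c • (lp.single 2 i (1:ℂ) : lp (fun _ : I => ℂ) 2) := by
  have := lp.single_smul (E := fun _ : I => ℂ) 2 i c (1:ℂ)
  rw [← this, smul_eq_mul, mul_one]

lemma clm_ext_single {F : Type*} [NormedAddCommGroup F] [NormedSpace ℂ F]
    (A B : lp (fun _ : I => ℂ) 2 →L[ℂ] F)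
    (h : ∀ i, A (lp.single 2 i (1:ℂ)) = B (lp.single 2 i (1:ℂ))) : A = B := by
  ext x
  have hs := lp.hasSum_single ENNReal.ofNat_ne_top x
  have hA := hs.mapL A
  have hB := hs.mapL B
  have hi : ∀ i, A (lp.single 2 i (x i)) = B (lp.single 2 i (x i)) := by
    intro i; rw [single_smul_one, map_smul, map_smul, h]
  simp_rw [hi] at hA
  exact hA.unique hB

end PJFaux

open PJFaux

set_option maxHeartbeats 1000000 in
/-- A frame `F` for the Krein space `H` is a Parseval J-frame iff `N(T)`
splits along `ℓ²(I₊) ⊕ ℓ²(I₋)` and `T⁺ f_i = (I - F₀) e_i` for the J₂-selfadjoint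
projection `F₀` onto `N(T)`. -/
theorem parseval_jframe_iff_kernel_projection
    (J : H →L[ℂ] H) (hJ : IsFundSym J) (f : I → H)
    (T : lp (fun _ : I => ℂ) 2 →L[ℂ] H)
    (hT : ∀ i, T (lp.single 2 i (1:ℂ)) = f i)
    (hTsurj : Function.Surjective T)
    (Pp Pm : lp (fun _ : I => ℂ) 2 →L[ℂ] lp (fun _ : I => ℂ) 2)
    (hPp : ∀ (x : lp (fun _ : I => ℂ) 2) (i : I), Pp x i = if posIdx J f i then x i else 0)
    (hPm : ∀ (x : lp (fun _ : I => ℂ) 2) (i : I), Pm x i = if posIdx J f i then 0 else x i)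
    (Tp : H →L[ℂ] lp (fun _ : I => ℂ) 2)
    (hTp : ∀ (x : lp (fun _ : I => ℂ) 2) (y : H), kre J (T x) y = kre (Pp - Pm) x (Tp y)) :
    (MaxUnifJPos J (LinearMap.range ((T.comp Pp : lp (fun _ : I => ℂ) 2 →L[ℂ] H) : lp (fun _ : I => ℂ) 2 →ₗ[ℂ] H)) ∧
        MaxUnifJNeg J (LinearMap.range ((T.comp Pm : lp (fun _ : I => ℂ) 2 →L[ℂ] H) : lp (fun _ : I => ℂ) 2 →ₗ[ℂ] H)) ∧
        T.comp Tp = ContinuousLinearMap.id ℂ H) ↔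
      (LinearMap.ker (T : lp (fun _ : I => ℂ) 2 →ₗ[ℂ] H) =
          (LinearMap.ker (T : lp (fun _ : I => ℂ) 2 →ₗ[ℂ] H) ⊓ suppSub (posIdx J f)) ⊔
            (LinearMap.ker (T : lp (fun _ : I => ℂ) 2 →ₗ[ℂ] H) ⊓ suppSub (fun i => ¬ posIdx J f i)) ∧
        ∃ F0 : lp (fun _ : I => ℂ) 2 →L[ℂ] lp (fun _ : I => ℂ) 2, F0.comp F0 = F0 ∧ IsJSelfAdj (Pp - Pm) F0 ∧
          LinearMap.range (F0 : lp (fun _ : I => ℂ) 2 →ₗ[ℂ] lp (fun _ : I => ℂ) 2) = (LinearMap.ker (T : lp (fun _ : I => ℂ) 2 →ₗ[ℂ] H) : Submodule ℂ (lp (fun _ : I => ℂ) 2)) ∧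
          ∀ i, Tp (f i) =
            (ContinuousLinearMap.id ℂ (lp (fun _ : I => ℂ) 2) - F0) (lp.single 2 i (1:ℂ))) := by
  
  classical
  -- coordinate lemmas
  have coesub : ∀ (a b : lp (fun _ : I => ℂ) 2) (i : I), (a - b) i = a i - b i := by
    intro a b i; rw [lp.coeFn_sub]; rfl
  have coeadd : ∀ (a b : lp (fun _ : I => ℂ) 2) (i : I), (a + b) i = a i + b i := by
    intro a b i; rw [lp.coeFn_add]; rfl
  have hJ2c : ∀ (x : lp (fun _ : I => ℂ) 2) (i : I),
      (Pp - Pm) x i = if posIdx J f i then x i else -x i := by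
    intro x i
    rw [ContinuousLinearMap.sub_apply, coesub, hPp, hPm]
    by_cases hi : posIdx J f i <;> simp [hi]
  have hPpPm : ∀ x : lp (fun _ : I => ℂ) 2, Pp x + Pm x = x := by
    intro x; apply lp2_ext; intro i
    rw [coeadd, hPp, hPm]; by_cases hi : posIdx J f i <;> simp [hi]
  have hPmdef : ∀ x : lp (fun _ : I => ℂ) 2, Pm x = x - Pp x :=
    fun x => eq_sub_of_add_eq' (hPpPm x)
  have hPpA : ∀ x : lp (fun _ : I => ℂ) 2, (∀ i, ¬ posIdx J f i → x i = 0) → Pp x = x := by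
    intro x hx; apply lp2_ext; intro i
    rw [hPp]; by_cases hi : posIdx J f i
    · simp [hi]
    · simp [hi, hx i hi]
  have hPpB : ∀ x : lp (fun _ : I => ℂ) 2, (∀ i, posIdx J f i → x i = 0) → Pp x = 0 := by
    intro x hx; apply lp2_ext; intro i
    have h0 : (0 : lp (fun _ : I => ℂ) 2) i = 0 := rfl
    rw [hPp, h0]
    by_cases hi : posIdx J f i
    · simp [hi, hx i hi]
    · simp [hi]
  have hJ2A : ∀ x : lp (fun _ : I => ℂ) 2, (∀ i, ¬ posIdx J f i → x i = 0) →
      (Pp - Pm) x = x := by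
    intro x hx; apply lp2_ext; intro i
    rw [hJ2c]; by_cases hi : posIdx J f i
    · simp [hi]
    · simp [hi, hx i hi]
  have hJ2B : ∀ x : lp (fun _ : I => ℂ) 2, (∀ i, posIdx J f i → x i = 0) →
      (Pp - Pm) x = -x := by
    intro x hx; apply lp2_ext; intro i
    have hneg : (-x : lp (fun _ : I => ℂ) 2) i = -(x i) := by rw [lp.coeFn_neg]; rfl
    rw [hJ2c, hneg]; by_cases hi : posIdx J f i
    · simp [hi, hx i hi]
    · simp [hi]
  have hJ2inv : ∀ x : lp (fun _ : I => ℂ) 2, (Pp - Pm) ((Pp - Pm) x) = x := by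
    intro x; apply lp2_ext; intro i
    rw [hJ2c, hJ2c]; by_cases hi : posIdx J f i <;> simp [hi]
  have hPpsa : ∀ x y : lp (fun _ : I => ℂ) 2,
      (inner ℂ (Pp x) y : ℂ) = inner ℂ x (Pp y) := by
    intro x y
    rw [lp.inner_eq_tsum, lp.inner_eq_tsum]
    apply tsum_congr; intro i
    rw [hPp, hPp]
    by_cases hi : posIdx J f i <;> simp [hi]
  have hJ2sa : ∀ x y : lp (fun _ : I => ℂ) 2,
      (inner ℂ ((Pp - Pm) x) y : ℂ) = inner ℂ x ((Pp - Pm) y) := by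
    intro x y
    rw [lp.inner_eq_tsum, lp.inner_eq_tsum]
    apply tsum_congr; intro i
    rw [hJ2c, hJ2c]
    by_cases hi : posIdx J f i <;> simp [hi]
  have hkre2sym : ∀ x y : lp (fun _ : I => ℂ) 2,
      kre (Pp - Pm) x y = (starRingEnd ℂ) (kre (Pp - Pm) y x) := by
    intro x y
    simp only [kre]
    rw [hJ2sa x y]
    exact (inner_conj_symm x _).symm
  have hkreJsym : ∀ x y : H, kre J x y = (starRingEnd ℂ) (kre J y x) := by
    have hsym := ContinuousLinearMap.isSelfAdjoint_iff_isSymmetric.mp hJ.1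
    intro x y
    simp only [kre]
    exact (hsym x y).trans (inner_conj_symm x _).symm
  constructor
  · rintro ⟨hPos, hNeg, hTTp⟩
    have hTTp' : ∀ y : H, T (Tp y) = y := by
      intro y
      have := congrArg (fun S : H →L[ℂ] H => S y) hTTp
      simpa using this
    have key0 : ∀ x : lp (fun _ : I => ℂ) 2, T x = 0 → T (Pp x) = 0 ∧ T (Pm x) = 0 := by
      intro x hx
      obtain ⟨a, haa, hαle⟩ := hPos.1
      obtain ⟨b, hbb, hβle⟩ := hNeg.1
      have hsum : T (Pp x) + T (Pm x) = 0 := by rw [← map_add, hPpPm, hx]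
      have heq : T (Pm x) = -T (Pp x) := eq_neg_of_add_eq_zero_right hsum
      have hmem1 : T (Pp x) ∈ LinearMap.range ((T.comp Pp : lp (fun _ : I => ℂ) 2 →L[ℂ] H) : lp (fun _ : I => ℂ) 2 →ₗ[ℂ] H) :=
        LinearMap.mem_range.mpr ⟨x, rfl⟩
      have hmem2 : T (Pm x) ∈ LinearMap.range ((T.comp Pm : lp (fun _ : I => ℂ) 2 →L[ℂ] H) : lp (fun _ : I => ℂ) 2 →ₗ[ℂ] H) :=
        LinearMap.mem_range.mpr ⟨x, rfl⟩
      have h1 := hαle _ hmem1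
      have h2 := hβle _ hmem2
      have hkk : kre J (T (Pm x)) (T (Pm x)) = kre J (T (Pp x)) (T (Pp x)) := by
        rw [heq]; simp only [kre, map_neg, inner_neg_neg]
      have hnn : ‖T (Pm x)‖ = ‖T (Pp x)‖ := by rw [heq, norm_neg]
      rw [hkk, hnn] at h2
      have h6 : a * ‖T (Pp x)‖ ^ 2 + b * ‖T (Pp x)‖ ^ 2 ≤ 0 := by linarith
      have h7 : ‖T (Pp x)‖ ^ 2 ≤ 0 := by nlinarith
      have hz : ‖T (Pp x)‖ = 0 :=
        pow_eq_zero_iff two_ne_zero |>.mp (le_antisymm h7 (sq_nonneg _))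
      have h3 : T (Pp x) = 0 := norm_eq_zero.mp hz
      exact ⟨h3, by rw [heq, h3, neg_zero]⟩
    refine ⟨?_, ?_⟩
    · apply le_antisymm
      · intro x hx
        have hx0 : T x = 0 := hx
        obtain ⟨h1, h2⟩ := key0 x hx0
        have hxeq : x = Pp x + Pm x := (hPpPm x).symm
        rw [hxeq]
        apply Submodule.add_mem
        · apply Submodule.mem_sup_left
          refine Submodule.mem_inf.mpr ⟨LinearMap.mem_ker.mpr h1, ?_⟩
          exact fun i hi => by rw [hPp]; simp [hi]
        · apply Submodule.mem_sup_right
          refine Submodule.mem_inf.mpr ⟨LinearMap.mem_ker.mpr h2, ?_⟩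
          exact fun i hi => by rw [hPm]; simp [not_not.mp hi]
      · exact sup_le inf_le_left inf_le_left
    · refine ⟨ContinuousLinearMap.id ℂ _ - Tp.comp T, ?_, ?_, ?_, ?_⟩
      · refine ContinuousLinearMap.ext fun x => ?_
        have e : ∀ z : lp (fun _ : I => ℂ) 2,
            (ContinuousLinearMap.id ℂ (lp (fun _ : I => ℂ) 2) - Tp.comp T) z
              = z - Tp (T z) := fun z => rfl
        rw [ContinuousLinearMap.comp_apply, e, e]
        simp [map_sub, hTTp']
      · intro x y
        have hQ : ∀ a b : lp (fun _ : I => ℂ) 2,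
            kre (Pp - Pm) (Tp (T a)) b = kre (Pp - Pm) a (Tp (T b)) := by
          intro a b
          rw [hkre2sym (Tp (T a)) b, ← hTp b (T a), ← hkreJsym (T a) (T b), hTp a (T b)]
        have e : ∀ z : lp (fun _ : I => ℂ) 2,
            (ContinuousLinearMap.id ℂ (lp (fun _ : I => ℂ) 2) - Tp.comp T) z
              = z - Tp (T z) := fun z => rfl
        rw [e x, e y]
        have hQ' := hQ x y
        simp only [kre, map_sub, inner_sub_left, inner_sub_right] at hQ' ⊢
        rw [hQ']
      · apply Submodule.ext
        intro x
        simp only [LinearMap.mem_range, LinearMap.mem_ker, ContinuousLinearMap.coe_coe]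
        have e : ∀ z : lp (fun _ : I => ℂ) 2,
            (ContinuousLinearMap.id ℂ (lp (fun _ : I => ℂ) 2) - Tp.comp T) z
              = z - Tp (T z) := fun z => rfl
        constructor
        · rintro ⟨y, rfl⟩
          rw [e, map_sub, hTTp' (T y), sub_self]
        · intro hx
          exact ⟨x, by rw [e, hx, map_zero, sub_zero]⟩
      · intro i
        rw [← hT i]
        have : (ContinuousLinearMap.id ℂ (lp (fun _ : I => ℂ) 2) -
            (ContinuousLinearMap.id ℂ (lp (fun _ : I => ℂ) 2) - Tp.comp T))
              (lp.single 2 i (1:ℂ)) = Tp (T (lp.single 2 i (1:ℂ))) := by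
          simp
        rw [this]
  · rintro ⟨hker, F0, hF0idem, hF0sa, hF0range, hF0single⟩
    have hF0idem' : ∀ x, F0 (F0 x) = F0 x := by
      intro x
      have := congrArg
        (fun S : lp (fun _ : I => ℂ) 2 →L[ℂ] lp (fun _ : I => ℂ) 2 => S x) hF0idem
      simpa using this
    have hmemker : ∀ x, F0 x ∈ LinearMap.ker (T : lp (fun _ : I => ℂ) 2 →ₗ[ℂ] H) := by
      intro x
      rw [← hF0range]
      exact LinearMap.mem_range_self _ x
    have hTF0 : ∀ x, T (F0 x) = 0 := fun x => hmemker x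
    have hfix : ∀ n, n ∈ LinearMap.ker (T : lp (fun _ : I => ℂ) 2 →ₗ[ℂ] H) → F0 n = n := by
      intro n hn
      rw [← hF0range] at hn
      obtain ⟨w, rfl⟩ := LinearMap.mem_range.mp hn
      exact hF0idem' w
    have hQT : ∀ x, Tp (T x) = x - F0 x := by
      have hcomp : Tp.comp T = ContinuousLinearMap.id ℂ _ - F0 := by
        apply clm_ext_single
        intro i
        show Tp (T (lp.single 2 i (1:ℂ))) = _
        rw [hT i, hF0single i]
      intro x
      have h := congrArg
        (fun S : lp (fun _ : I => ℂ) 2 →L[ℂ] lp (fun _ : I => ℂ) 2 => S x) hcomp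
      simpa using h
    have hTTp' : ∀ y, T (Tp y) = y := by
      intro y
      obtain ⟨x, rfl⟩ := hTsurj y
      rw [hQT x, map_sub, hTF0, sub_zero]
    have hTTp : T.comp Tp = ContinuousLinearMap.id ℂ H :=
      ContinuousLinearMap.ext fun y => by simpa using hTTp' y
    have horth : ∀ x : lp (fun _ : I => ℂ) 2,
        (∀ z, kre (Pp - Pm) x (F0 z) = 0) → F0 x = 0 := by
      intro x hx
      have h1 : ∀ z, (inner ℂ ((Pp - Pm) (F0 x)) z : ℂ) = 0 := by
        intro z
        have h := hF0sa x z
        simp only [kre] at h hx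
        exact h.trans (hx z)
      have h2 : (Pp - Pm) (F0 x) = 0 := inner_self_eq_zero.mp (h1 _)
      have h3 : (Pp - Pm) ((Pp - Pm) (F0 x)) = (Pp - Pm) 0 := by rw [h2]
      rw [hJ2inv, map_zero] at h3
      exact h3
    have hkerOrth : ∀ k : lp (fun _ : I => ℂ) 2, F0 k = 0 →
        ∀ n, n ∈ LinearMap.ker (T : lp (fun _ : I => ℂ) 2 →ₗ[ℂ] H) → kre (Pp - Pm) k n = 0 := by
      intro k hk n hn
      rw [← hF0range] at hn
      obtain ⟨z, rfl⟩ := LinearMap.mem_range.mp hn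
      rw [ContinuousLinearMap.coe_coe, ← hF0sa k z, hk]
      simp [kre]
    have hcommPp : ∀ y, F0 (Pp y) = Pp (F0 y) := by
      intro y
      have hFy : F0 y ∈ (LinearMap.ker (T : lp (fun _ : I => ℂ) 2 →ₗ[ℂ] H) ⊓ suppSub (posIdx J f)) ⊔
          (LinearMap.ker (T : lp (fun _ : I => ℂ) 2 →ₗ[ℂ] H) ⊓ suppSub fun i => ¬posIdx J f i) := by
        rw [← hker]; exact hmemker y
      obtain ⟨a, ha, b, hb, hab⟩ := Submodule.mem_sup.mp hFy
      have ha1 : a ∈ LinearMap.ker (T : lp (fun _ : I => ℂ) 2 →ₗ[ℂ] H) := (Submodule.mem_inf.mp ha).1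
      have ha2 : ∀ i, ¬ posIdx J f i → a i = 0 := (Submodule.mem_inf.mp ha).2
      have hb2 : ∀ i, posIdx J f i → b i = 0 :=
        fun i hi => (Submodule.mem_inf.mp hb).2 i (not_not_intro hi)
      set k := y - F0 y with hkdef
      have hk : F0 k = 0 := by rw [hkdef, map_sub, hF0idem', sub_self]
      have hPpk : F0 (Pp k) = 0 := by
        apply horth
        intro z
        have hFz : F0 z ∈ (LinearMap.ker (T : lp (fun _ : I => ℂ) 2 →ₗ[ℂ] H) ⊓ suppSub (posIdx J f)) ⊔
            (LinearMap.ker (T : lp (fun _ : I => ℂ) 2 →ₗ[ℂ] H) ⊓ suppSub fun i => ¬posIdx J f i) := by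
          rw [← hker]; exact hmemker z
        obtain ⟨a', ha', b', hb', hab'⟩ := Submodule.mem_sup.mp hFz
        have ha'1 : a' ∈ LinearMap.ker (T : lp (fun _ : I => ℂ) 2 →ₗ[ℂ] H) := (Submodule.mem_inf.mp ha').1
        have ha'2 : ∀ i, ¬ posIdx J f i → a' i = 0 := (Submodule.mem_inf.mp ha').2
        have hb'2 : ∀ i, posIdx J f i → b' i = 0 :=
          fun i hi => (Submodule.mem_inf.mp hb').2 i (not_not_intro hi)
        rw [← hab']
        have hJPpk : (Pp - Pm) (Pp k) = Pp k :=
          hJ2A _ (fun i hi => by rw [hPp]; simp [hi])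
        simp only [kre, inner_add_right]
        rw [hJPpk]
        have t1 : (inner ℂ (Pp k) a' : ℂ) = 0 := by
          rw [hPpsa, hPpA a' ha'2]
          have hko := hkerOrth k hk a' ha'1
          simp only [kre] at hko
          rwa [hJ2sa k a', hJ2A a' ha'2] at hko
        have t2 : (inner ℂ (Pp k) b' : ℂ) = 0 := by
          rw [hPpsa, hPpB b' hb'2, inner_zero_right]
        rw [t1, t2, add_zero]
      have hyk : Pp y = Pp (F0 y) + Pp k := by
        rw [← map_add]
        congr 1
        rw [hkdef]
        abel
      have hPpab : Pp (F0 y) = a := by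
        rw [← hab, map_add, hPpA a ha2, hPpB b hb2, add_zero]
      rw [hyk, map_add, hPpk, add_zero, hPpab]
      exact hfix a ha1
    have hcommPm : ∀ y, F0 (Pm y) = Pm (F0 y) := by
      intro y
      rw [hPmdef y, map_sub, hcommPp, ← hPmdef (F0 y)]
    have hval : ∀ x' : lp (fun _ : I => ℂ) 2, F0 x' = 0 →
        kre J (T x') (T x') = (inner ℂ ((Pp - Pm) x') x' : ℂ) := by
      intro x' h0
      have e1 : Tp (T x') = x' := by rw [hQT, h0, sub_zero]
      have h := hTp x' (T x')
      rw [e1] at h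
      exact h
    have hTne : (0:ℝ) < ‖T‖ ^ 2 + 1 := by positivity
    have hbound : ∀ x' : lp (fun _ : I => ℂ) 2,
        (‖T‖ ^ 2 + 1)⁻¹ * ‖T x'‖ ^ 2 ≤ ‖x'‖ ^ 2 := by
      intro x'
      have h1 : ‖T x'‖ ≤ ‖T‖ * ‖x'‖ := T.le_opNorm x'
      have h4 : ‖T x'‖ ^ 2 ≤ (‖T‖ ^ 2 + 1) * ‖x'‖ ^ 2 := by
        nlinarith [norm_nonneg (T x'), norm_nonneg x', norm_nonneg T]
      calc (‖T‖ ^ 2 + 1)⁻¹ * ‖T x'‖ ^ 2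
          ≤ (‖T‖ ^ 2 + 1)⁻¹ * ((‖T‖ ^ 2 + 1) * ‖x'‖ ^ 2) := by
            apply mul_le_mul_of_nonneg_left h4 (le_of_lt (by positivity))
        _ = ‖x'‖ ^ 2 := by
            rw [← mul_assoc, inv_mul_cancel₀ (ne_of_gt hTne), one_mul]
    have hPosU : UnifJPos J (LinearMap.range ((T.comp Pp : lp (fun _ : I => ℂ) 2 →L[ℂ] H) : lp (fun _ : I => ℂ) 2 →ₗ[ℂ] H)) := by
      refine ⟨(‖T‖ ^ 2 + 1)⁻¹, by positivity, ?_⟩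
      intro v hv
      obtain ⟨u, rfl⟩ := LinearMap.mem_range.mp hv
      set x' := Pp u - F0 (Pp u) with hx'
      have hx'2 : x' = Pp (u - F0 u) := by rw [hx', hcommPp, ← map_sub]
      have hTx' : T x' = T (Pp u) := by rw [hx', map_sub, hTF0, sub_zero]
      have hF0x' : F0 x' = 0 := by rw [hx', map_sub, hF0idem', sub_self]
      have hsupp : ∀ i, ¬ posIdx J f i → x' i = 0 := by
        intro i hi; rw [hx'2, hPp]; simp [hi]
      have happ : (T.comp Pp) u = T x' := by
        rw [ContinuousLinearMap.comp_apply, hTx']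
      show (‖T‖ ^ 2 + 1)⁻¹ * ‖(T.comp Pp) u‖ ^ 2 ≤ (kre J ((T.comp Pp) u) ((T.comp Pp) u)).re
      have hre : (inner ℂ x' x' : ℂ).re = ‖x'‖ ^ 2 := by
        rw [inner_self_eq_norm_sq_to_K]
        norm_cast
      rw [happ, hval x' hF0x', hJ2A x' hsupp, hre]
      exact hbound x'
    have hNegU : UnifJNeg J (LinearMap.range ((T.comp Pm : lp (fun _ : I => ℂ) 2 →L[ℂ] H) : lp (fun _ : I => ℂ) 2 →ₗ[ℂ] H)) := by
      refine ⟨(‖T‖ ^ 2 + 1)⁻¹, by positivity, ?_⟩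
      intro v hv
      obtain ⟨u, rfl⟩ := LinearMap.mem_range.mp hv
      set x' := Pm u - F0 (Pm u) with hx'
      have hx'2 : x' = Pm (u - F0 u) := by rw [hx', hcommPm, ← map_sub]
      have hTx' : T x' = T (Pm u) := by rw [hx', map_sub, hTF0, sub_zero]
      have hF0x' : F0 x' = 0 := by rw [hx', map_sub, hF0idem', sub_self]
      have hsupp : ∀ i, posIdx J f i → x' i = 0 := by
        intro i hi; rw [hx'2, hPm]; simp [hi]
      have happ : (T.comp Pm) u = T x' := by
        rw [ContinuousLinearMap.comp_apply, hTx']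
      show (kre J ((T.comp Pm) u) ((T.comp Pm) u)).re
          ≤ -((‖T‖ ^ 2 + 1)⁻¹ * ‖(T.comp Pm) u‖ ^ 2)
      have hre : (inner ℂ x' x' : ℂ).re = ‖x'‖ ^ 2 := by
        rw [inner_self_eq_norm_sq_to_K]
        norm_cast
      have hre2 : (-(inner ℂ x' x' : ℂ)).re = -(‖x'‖ ^ 2) := by
        rw [Complex.neg_re, hre]
      rw [happ, hval x' hF0x', hJ2B x' hsupp, inner_neg_left, hre2]
      have := hbound x'
      linarith
    have hsplitS : ∀ s : H, ∃ u : lp (fun _ : I => ℂ) 2,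
        s = T (Pp u) + T (Pm u) := by
      intro s
      obtain ⟨u, rfl⟩ := hTsurj s
      exact ⟨u, by rw [← map_add, hPpPm]⟩
    refine ⟨⟨hPosU, ?_⟩, ⟨hNegU, ?_⟩, hTTp⟩
    · intro S' hS' hle
      obtain ⟨a', ha', hle'⟩ := hS'
      obtain ⟨b', hb', hβle⟩ := hNegU
      refine le_antisymm ?_ hle
      intro s hs
      obtain ⟨x, rfl⟩ := hsplitS s
      have hmp : T (Pp x) ∈ LinearMap.range ((T.comp Pp : lp (fun _ : I => ℂ) 2 →L[ℂ] H) : lp (fun _ : I => ℂ) 2 →ₗ[ℂ] H) :=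
        LinearMap.mem_range.mpr ⟨x, rfl⟩
      have hmm : T (Pm x) ∈ LinearMap.range ((T.comp Pm : lp (fun _ : I => ℂ) 2 →L[ℂ] H) : lp (fun _ : I => ℂ) 2 →ₗ[ℂ] H) :=
        LinearMap.mem_range.mpr ⟨x, rfl⟩
      have hmem : T (Pm x) ∈ S' := by
        have h1 : T (Pp x) ∈ S' := hle hmp
        have h2 : T (Pm x) = (T (Pp x) + T (Pm x)) - T (Pp x) := by abel
        rw [h2]
        exact Submodule.sub_mem S' hs h1
      have hb := hβle (T (Pm x)) hmm
      have ha := hle' (T (Pm x)) hmem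
      have hz : T (Pm x) = 0 := by
        have h6 : a' * ‖T (Pm x)‖ ^ 2 + b' * ‖T (Pm x)‖ ^ 2 ≤ 0 := by linarith
        have h7 : ‖T (Pm x)‖ ^ 2 ≤ 0 := by nlinarith
        have h5 : ‖T (Pm x)‖ = 0 :=
          pow_eq_zero_iff two_ne_zero |>.mp (le_antisymm h7 (sq_nonneg _))
        exact norm_eq_zero.mp h5
      rw [hz, add_zero]
      exact hmp
    · intro S' hS' hle
      obtain ⟨a', ha', hle'⟩ := hS'
      obtain ⟨b', hb', hβle⟩ := hPosU
      refine le_antisymm ?_ hle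
      intro s hs
      obtain ⟨x, rfl⟩ := hsplitS s
      have hmp : T (Pp x) ∈ LinearMap.range ((T.comp Pp : lp (fun _ : I => ℂ) 2 →L[ℂ] H) : lp (fun _ : I => ℂ) 2 →ₗ[ℂ] H) :=
        LinearMap.mem_range.mpr ⟨x, rfl⟩
      have hmm : T (Pm x) ∈ LinearMap.range ((T.comp Pm : lp (fun _ : I => ℂ) 2 →L[ℂ] H) : lp (fun _ : I => ℂ) 2 →ₗ[ℂ] H) :=
        LinearMap.mem_range.mpr ⟨x, rfl⟩
      have hmem : T (Pp x) ∈ S' := by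
        have h1 : T (Pm x) ∈ S' := hle hmm
        have h2 : T (Pp x) = (T (Pp x) + T (Pm x)) - T (Pm x) := by abel
        rw [h2]
        exact Submodule.sub_mem S' hs h1
      have hb := hβle (T (Pp x)) hmp
      have ha := hle' (T (Pp x)) hmem
      have hz : T (Pp x) = 0 := by
        have h6 : a' * ‖T (Pp x)‖ ^ 2 + b' * ‖T (Pp x)‖ ^ 2 ≤ 0 := by linarith
        have h7 : ‖T (Pp x)‖ ^ 2 ≤ 0 := by nlinarith
        have h5 : ‖T (Pp x)‖ = 0 :=
          pow_eq_zero_iff two_ne_zero |>.mp (le_antisymm h7 (sq_nonneg _))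
        exact norm_eq_zero.mp h5
      rw [hz, zero_add]
      exact hmm
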